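/- Let N ≥ 2 be an integer and let A be an n × m matrix over ℤ/Nℤ (n, m ≥ 1) whose entries generate the unit ideal of ℤ/Nℤ. Then there exists a coefficient vector c ∈ (ℤ/Nℤ)ᵐ such that the linear combination A.mulVec c of the columns of A is primitive, i.e. its entries generate the unit ideal of ℤ/Nℤ. -/

import Mathlib

section Aux

variable {n m : ℕ}

/-- Auxiliary predicate: every "primitive" matrix over `R` admits a primitive
column combination, expressed via explicit sum equations. -/
def GoodRing (R : Type*) [CommRing R] (n m : ℕ) : Prop :=
  ∀ A : Matrix (Fin n) (Fin m) R,
    (∃ u : Fin n × Fin m → R, ∑ q, u q * A q.1 q.2 = 1) →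
    ∃ c : Fin m → R, ∃ w : Fin n → R, ∑ i, w i * ∑ j, A i j * c j = 1

lemma goodRing_of_equiv {R S : Type*} [CommRing R] [CommRing S] (e : R ≃+* S)
    (hR : GoodRing R n m) : GoodRing S n m := by
  intro A ⟨u, hu⟩
  obtain ⟨c, w, hcw⟩ := hR (fun i j => e.symm (A i j)) ⟨fun q => e.symm (u q), by
    apply e.injective
    simp only [map_sum, map_mul, RingEquiv.apply_symm_apply, map_one, hu]⟩
  refine ⟨fun j => e (c j), fun i => e (w i), ?_⟩
  have := congrArg e hcw
  simpa only [map_sum, map_mul, RingEquiv.apply_symm_apply, map_one] using this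

lemma goodRing_prod {R S : Type*} [CommRing R] [CommRing S]
    (hR : GoodRing R n m) (hS : GoodRing S n m) : GoodRing (R × S) n m := by
  intro A ⟨u, hu⟩
  obtain ⟨c₁, w₁, h₁⟩ := hR (fun i j => (A i j).1) ⟨fun q => (u q).1, by
    have := congrArg Prod.fst hu
    simpa [Prod.fst_sum] using this⟩
  obtain ⟨c₂, w₂, h₂⟩ := hS (fun i j => (A i j).2) ⟨fun q => (u q).2, by
    have := congrArg Prod.snd hu
    simpa [Prod.snd_sum] using this⟩
  refine ⟨fun j => (c₁ j, c₂ j), fun i => (w₁ i, w₂ i), ?_⟩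
  apply Prod.ext <;> simp [Prod.fst_sum, Prod.snd_sum, h₁, h₂]

lemma goodRing_of_isUnit_entry {R : Type*} [CommRing R]
    (h : ∀ A : Matrix (Fin n) (Fin m) R,
      (∃ u : Fin n × Fin m → R, ∑ q, u q * A q.1 q.2 = 1) →
      ∃ q : Fin n × Fin m, IsUnit (A q.1 q.2)) : GoodRing R n m := by
  intro A hu
  obtain ⟨q, hq⟩ := h A hu
  obtain ⟨v, hv⟩ := hq.exists_left_inv
  refine ⟨Pi.single q.2 1, Pi.single q.1 v, ?_⟩
  rw [Fintype.sum_eq_single q.1]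
  · rw [Fintype.sum_eq_single q.2]
    · simp [hv]
    · intro j hj; simp [Pi.single_apply, hj]
  · intro i hi; simp [Pi.single_apply, hi]

lemma goodRing_zmod_primePow {p k : ℕ} (hp : p.Prime) (hk : 1 ≤ k) :
    GoodRing (ZMod (p ^ k)) n m := by
  haveI : NeZero (p ^ k) := ⟨pow_ne_zero _ hp.pos.ne'⟩
  haveI : Fact p.Prime := ⟨hp⟩
  apply goodRing_of_isUnit_entry
  rintro A ⟨u, hu⟩
  by_contra hall
  push_neg at hall
  -- every entry maps to 0 in ZMod p
  have hmap : ∀ q : Fin n × Fin m, (ZMod.castHom (dvd_pow_self p (by omega : k ≠ 0)) (ZMod p)) (A q.1 q.2) = 0 := by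
    intro q
    by_contra h0
    apply hall q
    have hval : ¬ p ∣ (A q.1 q.2).val := by
      intro hdvd
      apply h0
      rw [ZMod.castHom_apply, ← ZMod.natCast_val]
      exact (ZMod.natCast_eq_zero_iff _ _).mpr hdvd
    have hcop : ((A q.1 q.2).val).Coprime (p ^ k) :=
      Nat.Coprime.pow_right _ ((hp.coprime_iff_not_dvd.mpr hval).symm)
    have := (ZMod.isUnit_iff_coprime (A q.1 q.2).val (p ^ k)).mpr hcop
    rwa [ZMod.natCast_val, ZMod.cast_id] at this
  have h1 : (1 : ZMod p) = 0 := by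
    have := congrArg (ZMod.castHom (dvd_pow_self p (by omega : k ≠ 0)) (ZMod p)) hu
    simp only [map_sum, map_mul, map_one] at this
    rw [← this]
    exact Finset.sum_eq_zero fun q _ => by rw [hmap q, mul_zero]
  exact one_ne_zero h1

lemma goodRing_zmod : ∀ N : ℕ, 1 ≤ N → GoodRing (ZMod N) n m := by
  intro N
  induction N using Nat.strong_induction_on with
  | _ N ih =>
    intro hN
    rcases eq_or_lt_of_le hN with h1 | h2
    · -- N = 1 : trivial ring
      subst h1
      intro A _
      exact ⟨0, 0, Subsingleton.elim _ _⟩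
    · -- N ≥ 2
      set p := N.minFac with hp_def
      have hp : p.Prime := Nat.minFac_prime (by omega)
      have hN0 : N ≠ 0 := by omega
      set k := N.factorization p with hk_def
      have hk : 1 ≤ k := hp.factorization_pos_of_dvd hN0 (Nat.minFac_dvd N)
      set M := N / p ^ k with hM_def
      have hcop : (p ^ k).Coprime M :=
        Nat.Coprime.pow_left _ (Nat.coprime_ordCompl hp hN0)
      have hNe : p ^ k * M = N := Nat.ordProj_mul_ordCompl_eq_self N p
      rcases eq_or_ne M 1 with hM1 | hM1
      · -- N = p ^ k
        rw [hM1, mul_one] at hNe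
        rw [← hNe]
        exact goodRing_zmod_primePow hp hk
      · have hMpos : 1 ≤ M := Nat.pos_of_ne_zero (by
          intro h; rw [h, mul_zero] at hNe; omega)
        have hpk2 : 2 ≤ p ^ k :=
          le_trans hp.two_le (Nat.le_self_pow (by omega : k ≠ 0) p)
        have hM2 : 2 ≤ M := by omega
        have hMlt : M < N := by nlinarith [hNe, hpk2, hM2]
        have hpklt : p ^ k < N := by nlinarith [hNe, hpk2, hM2]
        have g1 : GoodRing (ZMod (p ^ k)) n m := goodRing_zmod_primePow hp hk
        have g2 : GoodRing (ZMod M) n m := ih M hMlt hMpos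
        have := goodRing_of_equiv (ZMod.chineseRemainder hcop).symm (goodRing_prod g1 g2)
        rwa [hNe] at this

end Aux

/-- Over `ℤ/Nℤ`, any matrix with primitive entries admits a linear combination of its
columns that is primitive. -/
theorem exists_primitive_column_combination_zmod
    {N : ℕ} (hN : 2 ≤ N) {n m : ℕ} (hn : 1 ≤ n) (hm : 1 ≤ m)
    (A : Matrix (Fin n) (Fin m) (ZMod N))
    (hA : Ideal.span (Set.range fun q : Fin n × Fin m => A q.1 q.2) = ⊤) :
    ∃ c : Fin m → ZMod N,
      Ideal.span (Set.range (A.mulVec c)) = ⊤ := by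
  have h1 : (1 : ZMod N) ∈ Ideal.span (Set.range fun q : Fin n × Fin m => A q.1 q.2) := by
    rw [hA]; trivial
  rw [Ideal.span, Submodule.mem_span_range_iff_exists_fun] at h1
  obtain ⟨u, hu⟩ := h1
  obtain ⟨c, w, hcw⟩ := goodRing_zmod N (by omega) A ⟨u, by simpa [smul_eq_mul] using hu⟩
  refine ⟨c, ?_⟩
  rw [Ideal.eq_top_iff_one, Ideal.span, Submodule.mem_span_range_iff_exists_fun]
  refine ⟨w, ?_⟩
  simpa [Matrix.mulVec, dotProduct, smul_eq_mul] using hcw
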